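/- Let (V₁, V₂, V₃) be a Markovian sequence of random variables with values in standard Borel spaces, and suppose ψ(V₂ | V₁) < ∞ and ψ(V₃ | V₂) < ∞. Then ψ(V₃ | V₁) ≤ ψ(V₃ | V₂) · ψ(V₂ | V₁). -/

import Mathlib

open MeasureTheory
open scoped ENNReal

/-- The ψ-dependence coefficient of random variables `V` and `W`. -/
noncomputable def psiDep {Ω E F : Type*} [MeasurableSpace Ω] [MeasurableSpace E]
    [MeasurableSpace F] (μ : Measure Ω) (V : Ω → E) (W : Ω → F) : ℝ≥0∞ :=
  ⨆ (A : Set E) (B : Set F) (_ : MeasurableSet A) (_ : MeasurableSet B)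
    (_ : μ (V ⁻¹' A) ≠ 0) (_ : μ (W ⁻¹' B) ≠ 0),
    ENNReal.ofReal
      (|(μ (V ⁻¹' A ∩ W ⁻¹' B)).toReal - (μ (V ⁻¹' A)).toReal * (μ (W ⁻¹' B)).toReal| /
        ((μ (V ⁻¹' A)).toReal * (μ (W ⁻¹' B)).toReal))

/-- Extract the pointwise bound from finiteness of `psiDep`. -/
lemma psiDep_bound {Ω E F : Type*} [MeasurableSpace Ω] [MeasurableSpace E]
    [MeasurableSpace F] (μ : Measure Ω) [IsProbabilityMeasure μ] (V : Ω → E) (W : Ω → F)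
    (hψ : psiDep μ V W ≠ ⊤) {A : Set E} {B : Set F}
    (hA : MeasurableSet A) (hB : MeasurableSet B)
    (hA0 : μ (V ⁻¹' A) ≠ 0) (hB0 : μ (W ⁻¹' B) ≠ 0) :
    |(μ (V ⁻¹' A ∩ W ⁻¹' B)).toReal - (μ (V ⁻¹' A)).toReal * (μ (W ⁻¹' B)).toReal|
      ≤ (psiDep μ V W).toReal * ((μ (V ⁻¹' A)).toReal * (μ (W ⁻¹' B)).toReal) := by
  set p := (μ (V ⁻¹' A)).toReal with hp
  set q := (μ (W ⁻¹' B)).toReal with hq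
  have hppos : 0 < p := ENNReal.toReal_pos hA0 (measure_ne_top μ _)
  have hqpos : 0 < q := ENNReal.toReal_pos hB0 (measure_ne_top μ _)
  have hle : ENNReal.ofReal
      (|(μ (V ⁻¹' A ∩ W ⁻¹' B)).toReal - p * q| / (p * q)) ≤ psiDep μ V W := by
    unfold psiDep
    exact le_iSup_of_le A (le_iSup_of_le B (le_iSup_of_le hA (le_iSup_of_le hB
      (le_iSup_of_le hA0 (le_iSup_of_le hB0 le_rfl)))))
  have h2 := (ENNReal.ofReal_le_iff_le_toReal hψ).mp hle
  rw [div_le_iff₀ (by positivity)] at h2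
  linarith [h2]

/-- A.e. bound on a conditional expectation of an indicator with respect to a
sub-σ-algebra, given uniform bounds over its events. -/
lemma condexp_indicator_ae_bound {Ω : Type*} {m : MeasurableSpace Ω} [mΩ : MeasurableSpace Ω]
    (μ : Measure Ω) [IsProbabilityMeasure μ] (hm : m ≤ mΩ)
    {T : Set Ω} (hT : MeasurableSet T) {r : ℝ}
    (hbd : ∀ D : Set Ω, MeasurableSet[m] D → μ D ≠ 0 →
      |(μ (T ∩ D)).toReal - (μ T).toReal * (μ D).toReal|
        ≤ r * ((μ T).toReal * (μ D).toReal)) :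
    ∀ᵐ ω ∂μ, |(μ[Set.indicator T (fun _ => (1:ℝ)) | m]) ω - (μ T).toReal|
      ≤ r * (μ T).toReal := by
  haveI : IsFiniteMeasure (μ.trim hm) := isFiniteMeasure_trim hm
  set a := (μ T).toReal with ha
  set g := μ[Set.indicator T (fun _ => (1:ℝ)) | m] with hgdef
  have hint : Integrable (Set.indicator T (fun _ => (1:ℝ))) μ :=
    (integrable_const (1:ℝ)).indicator hT
  have hg_meas : StronglyMeasurable[m] g := stronglyMeasurable_condExp
  have hg_int : Integrable g μ := integrable_condExp
  have key : ∀ D : Set Ω, MeasurableSet[m] D →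
      ∫ x in D, g x ∂μ = (μ (T ∩ D)).toReal := by
    intro D hDm
    rw [hgdef, setIntegral_condExp hm hint hDm, setIntegral_indicator hT,
      setIntegral_const, smul_eq_mul, mul_one, Set.inter_comm, measureReal_def]
  have upper : ∀ δ : ℝ, 0 < δ → μ {ω | a + r * a + δ ≤ g ω} = 0 := by
    intro δ hδ
    set D := {ω | a + r * a + δ ≤ g ω} with hD
    have hDm : MeasurableSet[m] D := by
      exact @measurableSet_le _ _ _ _ _ m _ _ _ _ _ measurable_const hg_meas.measurable
    by_contra hD0
    have hb := hbd D hDm hD0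
    have hi := key D hDm
    have h1 : (a + r * a + δ) * (μ D).toReal ≤ ∫ x in D, g x ∂μ :=
      setIntegral_ge_of_const_le_real (hm _ hDm) (measure_ne_top μ D)
        (fun x hx => hx) hg_int.integrableOn
    have h2 : (μ (T ∩ D)).toReal ≤ a * (μ D).toReal + r * (a * (μ D).toReal) := by
      cases abs_le.mp hb with | intro l r => linarith
    have hDpos : 0 < (μ D).toReal := ENNReal.toReal_pos hD0 (measure_ne_top μ D)
    nlinarith [hi ▸ h1]
  have lower : ∀ δ : ℝ, 0 < δ → μ {ω | g ω ≤ a - r * a - δ} = 0 := by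
    intro δ hδ
    set D := {ω | g ω ≤ a - r * a - δ} with hD
    have hDm : MeasurableSet[m] D := by
      exact @measurableSet_le _ _ _ _ _ m _ _ _ _ _ hg_meas.measurable measurable_const
    by_contra hD0
    have hb := hbd D hDm hD0
    have hi := key D hDm
    have h1 : ∫ x in D, g x ∂μ ≤ (a - r * a - δ) * (μ D).toReal := by
      have := setIntegral_mono_on hg_int.integrableOn
        integrableOn_const (hm _ hDm)
        (fun x hx => hx)
      rwa [setIntegral_const, smul_eq_mul, mul_comm] at this
    have h2 : a * (μ D).toReal - r * (a * (μ D).toReal) ≤ (μ (T ∩ D)).toReal := by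
      cases abs_le.mp hb with | intro l r => linarith
    have hDpos : 0 < (μ D).toReal := ENNReal.toReal_pos hD0 (measure_ne_top μ D)
    nlinarith [hi ▸ h1]
  have hsub : {ω | ¬ |g ω - a| ≤ r * a} ⊆
      ⋃ n : ℕ, ({ω | a + r * a + 1/(n+1) ≤ g ω} ∪ {ω | g ω ≤ a - r * a - 1/(n+1)}) := by
    intro ω hω
    simp only [Set.mem_setOf_eq, not_le] at hω
    obtain ⟨n, hn⟩ := exists_nat_one_div_lt (show (0:ℝ) < |g ω - a| - r * a by linarith)
    refine Set.mem_iUnion.mpr ⟨n, ?_⟩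
    rcases le_or_gt a (g ω) with h | h
    · left; simp only [Set.mem_setOf_eq]
      have : |g ω - a| = g ω - a := abs_of_nonneg (by linarith)
      rw [this] at hn; push_cast at hn ⊢; linarith
    · right; simp only [Set.mem_setOf_eq]
      have : |g ω - a| = -(g ω - a) := abs_of_neg (by linarith)
      rw [this] at hn; push_cast at hn ⊢; linarith
  rw [MeasureTheory.ae_iff]
  refine measure_mono_null hsub (measure_iUnion_null fun n => measure_union_null ?_ ?_)
  · exact upper _ (by positivity)
  · exact lower _ (by positivity)

theorem stmt5 {Ω B₁ B₂ B₃ : Type*} [MeasurableSpace Ω]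
    [MeasurableSpace B₁] [MeasurableSpace B₂] [MeasurableSpace B₃]
    [StandardBorelSpace B₁] [StandardBorelSpace B₂] [StandardBorelSpace B₃]
    (μ : Measure Ω) [IsProbabilityMeasure μ]
    (V₁ : Ω → B₁) (V₂ : Ω → B₂) (V₃ : Ω → B₃)
    (h₁ : Measurable V₁) (h₂ : Measurable V₂) (h₃ : Measurable V₃)
    -- Markov property: the conditional law of `V₃` given `(V₁, V₂)` equals the
    -- conditional law of `V₃` given `V₂`.
    (hMarkov : ∀ E : Set B₃, MeasurableSet E →
      μ[Set.indicator (V₃ ⁻¹' E) (fun _ => (1:ℝ)) |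
          MeasurableSpace.comap (fun ω => (V₁ ω, V₂ ω)) inferInstance]
        =ᵐ[μ]
      μ[Set.indicator (V₃ ⁻¹' E) (fun _ => (1:ℝ)) | MeasurableSpace.comap V₂ inferInstance])
    (hψ21 : psiDep μ V₂ V₁ ≠ ⊤) (hψ32 : psiDep μ V₃ V₂ ≠ ⊤) :
    psiDep μ V₃ V₁ ≤ psiDep μ V₃ V₂ * psiDep μ V₂ V₁ := by
  set r32 := (psiDep μ V₃ V₂).toReal with hr32
  set r21 := (psiDep μ V₂ V₁).toReal with hr21
  have hr32n : 0 ≤ r32 := ENNReal.toReal_nonneg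
  have hr21n : 0 ≤ r21 := ENNReal.toReal_nonneg
  conv_lhs => rw [psiDep]
  refine iSup_le fun A => iSup_le fun C => iSup_le fun hA => iSup_le fun hC =>
    iSup_le fun hA0 => iSup_le fun hC0 => ?_
  set T₃ := V₃ ⁻¹' A with hT₃def
  set T₁ := V₁ ⁻¹' C with hT₁def
  have hT₃ : MeasurableSet T₃ := h₃ hA
  have hT₁ : MeasurableSet T₁ := h₁ hC
  set a := (μ T₃).toReal with hadef
  set c := (μ T₁).toReal with hcdef
  have hapos : 0 < a := ENNReal.toReal_pos hA0 (measure_ne_top μ _)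
  have hcpos : 0 < c := ENNReal.toReal_pos hC0 (measure_ne_top μ _)
  have hm₂ : MeasurableSpace.comap V₂ inferInstance ≤ ‹MeasurableSpace Ω› := h₂.comap_le
  have hm₁₂ : MeasurableSpace.comap (fun ω => (V₁ ω, V₂ ω)) inferInstance
      ≤ ‹MeasurableSpace Ω› := (h₁.prodMk h₂).comap_le
  haveI : IsFiniteMeasure (μ.trim hm₂) := isFiniteMeasure_trim hm₂
  haveI : IsFiniteMeasure (μ.trim hm₁₂) := isFiniteMeasure_trim hm₁₂
  set f₃ := Set.indicator T₃ (fun _ => (1:ℝ)) with hf₃def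
  set f₁ := Set.indicator T₁ (fun _ => (1:ℝ)) with hf₁def
  have hint₃ : Integrable f₃ μ := (integrable_const (1:ℝ)).indicator hT₃
  have hint₁ : Integrable f₁ μ := (integrable_const (1:ℝ)).indicator hT₁
  set g := μ[f₃ | MeasurableSpace.comap V₂ inferInstance] with hgdef
  set k := μ[f₁ | MeasurableSpace.comap V₂ inferInstance] with hkdef
  have hg_meas : StronglyMeasurable[MeasurableSpace.comap V₂ inferInstance] g :=
    stronglyMeasurable_condExp
  have hg_int : Integrable g μ := integrable_condExp
  have hk_int : Integrable k μ := integrable_condExp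
  -- a.e. bounds
  have hg_bd : ∀ᵐ ω ∂μ, |g ω - a| ≤ r32 * a := by
    refine condexp_indicator_ae_bound μ hm₂ hT₃ fun D hDm hD0 => ?_
    obtain ⟨S, hS, hSD⟩ := hDm
    rw [← hSD] at hD0 ⊢
    exact psiDep_bound μ V₃ V₂ hψ32 hA hS hA0 hD0
  have hk_bd : ∀ᵐ ω ∂μ, |k ω - c| ≤ r21 * c := by
    refine condexp_indicator_ae_bound μ hm₂ hT₁ fun D hDm hD0 => ?_
    obtain ⟨S, hS, hSD⟩ := hDm
    rw [← hSD] at hD0 ⊢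
    have := psiDep_bound μ V₂ V₁ hψ21 hS hC hD0 hC0
    rw [Set.inter_comm] at this
    calc |(μ (T₁ ∩ V₂ ⁻¹' S)).toReal - c * (μ (V₂ ⁻¹' S)).toReal|
        = |(μ (T₁ ∩ V₂ ⁻¹' S)).toReal - (μ (V₂ ⁻¹' S)).toReal * c| := by ring_nf
      _ ≤ r21 * ((μ (V₂ ⁻¹' S)).toReal * c) := this
      _ = r21 * (c * (μ (V₂ ⁻¹' S)).toReal) := by ring
  -- T₁ is m₁₂-measurable
  have hT₁m : MeasurableSet[MeasurableSpace.comap (fun ω => (V₁ ω, V₂ ω)) inferInstance] T₁ := by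
    refine ⟨C ×ˢ Set.univ, hC.prod MeasurableSet.univ, ?_⟩
    ext ω; simp [hT₁def]
  -- identity I1 : ∫ f₁ * g = μ (T₁ ∩ T₃)
  have hf₁g : (fun ω => f₁ ω * g ω) = Set.indicator T₁ g := by
    funext ω
    by_cases hω : ω ∈ T₁ <;>
      simp [hf₁def, Set.indicator_of_mem, Set.indicator_of_notMem, hω]
  have I1 : ∫ ω, f₁ ω * g ω ∂μ = (μ (T₁ ∩ T₃)).toReal := by
    rw [hf₁g, integral_indicator hT₁]
    have step1 : ∫ x in T₁, g x ∂μ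
        = ∫ x in T₁, (μ[f₃ | MeasurableSpace.comap (fun ω => (V₁ ω, V₂ ω)) inferInstance]) x ∂μ :=
      setIntegral_congr_ae hT₁ (by
        filter_upwards [hMarkov A hA] with ω hω _
        exact hω.symm)
    rw [step1, setIntegral_condExp hm₁₂ hint₃ hT₁m, hf₃def, setIntegral_indicator hT₃,
      setIntegral_const, smul_eq_mul, mul_one, measureReal_def]
  -- integrability of products
  have hg_norm_bd : ∀ᵐ ω ∂μ, ‖g ω‖ ≤ r32 * a + a := by
    filter_upwards [hg_bd] with ω hω
    rw [Real.norm_eq_abs]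
    have h1 := abs_le.mp hω
    have h2 := le_abs_self (g ω - a)
    have h3 := neg_abs_le (g ω - a)
    rw [abs_le]; constructor <;> linarith
  have hgf₁_int : Integrable (fun ω => g ω * f₁ ω) μ :=
    hint₁.bdd_mul hg_int.aestronglyMeasurable hg_norm_bd
  have hgk_int : Integrable (fun ω => g ω * k ω) μ :=
    hk_int.bdd_mul hg_int.aestronglyMeasurable hg_norm_bd
  -- identity I2 : ∫ f₁ * g = ∫ g * k
  have I2 : ∫ ω, f₁ ω * g ω ∂μ = ∫ ω, g ω * k ω ∂μ := by
    have hpull : μ[(fun ω => g ω * f₁ ω) | MeasurableSpace.comap V₂ inferInstance]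
        =ᵐ[μ] fun ω => g ω * k ω := by
      have := condExp_mul_of_stronglyMeasurable_left hg_meas (by exact hgf₁_int) hint₁
      filter_upwards [this] with ω hω
      exact hω
    calc ∫ ω, f₁ ω * g ω ∂μ = ∫ ω, g ω * f₁ ω ∂μ := by simp_rw [mul_comm]
      _ = ∫ ω, (μ[(fun ω => g ω * f₁ ω) | MeasurableSpace.comap V₂ inferInstance]) ω ∂μ :=
        (integral_condExp hm₂).symm
      _ = ∫ ω, g ω * k ω ∂μ := integral_congr_ae hpull
  have I3 : ∫ ω, g ω ∂μ = a := by
    rw [hgdef, integral_condExp hm₂, hf₃def, integral_indicator_const _ hT₃,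
      smul_eq_mul, mul_one, measureReal_def]
  have I4 : ∫ ω, k ω ∂μ = c := by
    rw [hkdef, integral_condExp hm₂, hf₁def, integral_indicator_const _ hT₁,
      smul_eq_mul, mul_one, measureReal_def]
  -- main algebraic identity
  have Ialg : ∫ ω, (g ω - a) * (k ω - c) ∂μ = (μ (T₁ ∩ T₃)).toReal - a * c := by
    have h1 : Integrable (fun ω => g ω * k ω - a * k ω) μ := hgk_int.sub (hk_int.const_mul a)
    have h2 : Integrable (fun ω => g ω * k ω - a * k ω - c * g ω) μ :=
      h1.sub (hg_int.const_mul c)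
    have hI : ∫ ω, g ω * k ω ∂μ = (μ (T₁ ∩ T₃)).toReal := by rw [← I2, I1]
    calc ∫ ω, (g ω - a) * (k ω - c) ∂μ
        = ∫ ω, (g ω * k ω - a * k ω - c * g ω + a * c) ∂μ := by
          congr 1; funext ω; ring
      _ = (∫ ω, (g ω * k ω - a * k ω - c * g ω) ∂μ) + ∫ _ω, a * c ∂μ :=
          integral_add h2 (integrable_const _)
      _ = ((∫ ω, (g ω * k ω - a * k ω) ∂μ) - ∫ ω, c * g ω ∂μ) + ∫ _ω, a * c ∂μ := by
          rw [integral_sub h1 (hg_int.const_mul c)]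
      _ = (((∫ ω, g ω * k ω ∂μ) - ∫ ω, a * k ω ∂μ) - ∫ ω, c * g ω ∂μ) + ∫ _ω, a * c ∂μ := by
          rw [integral_sub hgk_int (hk_int.const_mul a)]
      _ = (μ (T₁ ∩ T₃)).toReal - a * c := by
          rw [integral_const_mul, integral_const_mul, I3, I4, integral_const, hI]
          simp only [measureReal_def, measure_univ, ENNReal.toReal_one, smul_eq_mul, one_mul]
          ring
  -- bound the integral
  have hprod_int : Integrable (fun ω => (g ω - a) * (k ω - c)) μ := by
    refine (hk_int.sub (integrable_const c)).bdd_mul (c := r32 * a)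
      ((hg_int.sub (integrable_const a)).aestronglyMeasurable) ?_
    filter_upwards [hg_bd] with ω hω
    simpa [Real.norm_eq_abs] using hω
  have hbound : |(μ (T₁ ∩ T₃)).toReal - a * c| ≤ (r32 * a) * (r21 * c) := by
    rw [← Ialg]
    calc |∫ ω, (g ω - a) * (k ω - c) ∂μ| ≤ ∫ ω, ‖(g ω - a) * (k ω - c)‖ ∂μ := by
          simpa [Real.norm_eq_abs] using norm_integral_le_integral_norm
            (μ := μ) (fun ω => (g ω - a) * (k ω - c))
      _ ≤ ∫ _ω, (r32 * a) * (r21 * c) ∂μ := by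
          refine integral_mono_ae hprod_int.norm (integrable_const _) ?_
          filter_upwards [hg_bd, hk_bd] with ω h1 h2
          rw [Real.norm_eq_abs, abs_mul]
          exact mul_le_mul h1 h2 (abs_nonneg _) (by positivity)
      _ = (r32 * a) * (r21 * c) := by simp [measure_univ]
  -- conclude
  rw [show V₃ ⁻¹' A ∩ V₁ ⁻¹' C = T₁ ∩ T₃ from Set.inter_comm _ _]
  rw [ENNReal.ofReal_le_iff_le_toReal (ENNReal.mul_ne_top hψ32 hψ21), ENNReal.toReal_mul]
  rw [div_le_iff₀ (by positivity)]
  calc |(μ (T₁ ∩ T₃)).toReal - a * c| ≤ (r32 * a) * (r21 * c) := hbound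
    _ = r32 * r21 * (a * c) := by ring
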